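/- Let A be a positive definite matrix with m·I ≤ A ≤ M·I for 0 < m ≤ M, and let Φ be a unital positive linear map on matrices. Then Φ(A^{-1}) ≤ ((M+m)²/(4Mm))·Φ(A)^{-1}. -/

import Mathlib

open Matrix

private lemma posSemidef_smul' {n : Type*} [Fintype n] {A : Matrix n n ℝ} (hA : A.PosSemidef)
    {c : ℝ} (hc : 0 ≤ c) : (c • A).PosSemidef := by
  refine .of_dotProduct_mulVec_nonneg ?_ fun x => ?_
  · unfold Matrix.IsHermitian
    rw [conjTranspose_smul, hA.1.eq]
    simp
  · rw [smul_mulVec, dotProduct_smul, smul_eq_mul]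
    exact mul_nonneg hc (hA.dotProduct_mulVec_nonneg x)

private lemma posDef_smul_one {n : Type*} [Fintype n] [DecidableEq n]
    {c : ℝ} (hc : 0 < c) : (c • (1 : Matrix n n ℝ)).PosDef := by
  have : c • (1 : Matrix n n ℝ) = diagonal (fun _ => c) := by
    simp [smul_eq_diagonal_mul]
  rw [this]
  exact Matrix.PosDef.diagonal (fun _ => hc)

theorem kantorovich_map_inv {n : Type*} [Fintype n] [DecidableEq n]
    (m M : ℝ) (hm : 0 < m) (hmM : m ≤ M)
    (A : Matrix n n ℝ) (hA : A.PosDef)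
    (hmA : (A - m • (1 : Matrix n n ℝ)).PosSemidef)
    (hAM : (M • (1 : Matrix n n ℝ) - A).PosSemidef)
    (Φ : Matrix n n ℝ →ₗ[ℝ] Matrix n n ℝ)
    (hΦpos : ∀ X : Matrix n n ℝ, X.PosSemidef → (Φ X).PosSemidef)
    (hΦ1 : Φ 1 = 1) :
    (((M + m) ^ 2 / (4 * M * m)) • (Φ A)⁻¹ - Φ A⁻¹).PosSemidef := by
  have hM : 0 < M := lt_of_lt_of_le hm hmM
  set d : n → ℝ := hA.1.eigenvalues with hd_def
  have hd_pos : ∀ i, 0 < d i := hA.eigenvalues_pos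
  -- eigenvalue bounds
  have hd_bounds : ∀ i, m ≤ d i ∧ d i ≤ M := by
    intro i
    set v : n → ℝ := ⇑(hA.1.eigenvectorBasis i) with hv_def
    have hv_ne : v ≠ 0 := by
      rw [hv_def]; intro h; apply hA.1.eigenvectorBasis.orthonormal.ne_zero i; ext j; exact congrFun h j
    have hvv : 0 < dotProduct v v := by
      have := Matrix.dotProduct_star_self_pos_iff (v := v) |>.mpr hv_ne
      simpa using this
    have hAv : A *ᵥ v = d i • v := hA.1.mulVec_eigenvectorBasis i
    constructor
    · have h1 := hmA.dotProduct_mulVec_nonneg v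
      have : (A - m • (1 : Matrix n n ℝ)) *ᵥ v = (d i - m) • v := by
        rw [sub_mulVec, hAv, smul_mulVec, one_mulVec, sub_smul]
      rw [this] at h1
      simp only [star_trivial, dotProduct_smul, smul_eq_mul] at h1
      nlinarith
    · have h1 := hAM.dotProduct_mulVec_nonneg v
      have : (M • (1 : Matrix n n ℝ) - A) *ᵥ v = (M - d i) • v := by
        rw [sub_mulVec, hAv, smul_mulVec, one_mulVec, sub_smul]
      rw [this] at h1
      simp only [star_trivial, dotProduct_smul, smul_eq_mul] at h1
      nlinarith
  set U : Matrix n n ℝ := (hA.1.eigenvectorUnitary : Matrix n n ℝ) with hU_def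
  have hUU' : U * Uᴴ = 1 := by
    have := hA.1.eigenvectorUnitary.2
    rw [Matrix.mem_unitaryGroup_iff] at this
    simpa [star_eq_conjTranspose] using this
  have hU'U : Uᴴ * U = 1 := by
    have := hA.1.eigenvectorUnitary.2
    rw [Matrix.mem_unitaryGroup_iff'] at this
    simpa [star_eq_conjTranspose] using this
  have hAspec : A = U * diagonal d * Uᴴ := by
    have := hA.1.spectral_theorem
    simpa [star_eq_conjTranspose, Function.comp] using this
  have hd_ne : ∀ i, d i ≠ 0 := fun i => (hd_pos i).ne'
  have hAinv : A⁻¹ = U * diagonal (fun i => (d i)⁻¹) * Uᴴ := by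
    apply inv_eq_right_inv
    calc A * (U * diagonal (fun i => (d i)⁻¹) * Uᴴ)
        = U * (diagonal d * (Uᴴ * U) * diagonal (fun i => (d i)⁻¹)) * Uᴴ := by
          rw [hAspec]; simp only [Matrix.mul_assoc]
      _ = 1 := by
          rw [hU'U, Matrix.mul_one, diagonal_mul_diagonal]
          simp only [mul_inv_cancel₀ (hd_ne _)]
          have h1 : diagonal (fun _ : n => (1:ℝ)) = 1 := diagonal_one
          rw [h1, Matrix.mul_one, hUU']
  -- Step 1: (M+m)•1 - (M*m)•A⁻¹ - A is PSD
  set f : n → ℝ := fun i => (M + m) - (M * m) * (d i)⁻¹ - d i with hf_def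
  have hf_nonneg : ∀ i, 0 ≤ f i := by
    intro i
    obtain ⟨h1, h2⟩ := hd_bounds i
    have hdi := hd_pos i
    have key : f i = (M - d i) * (d i - m) * (d i)⁻¹ := by
      simp only [hf_def]
      field_simp [hf_def]
      ring
    rw [key]
    exact mul_nonneg (mul_nonneg (by linarith) (by linarith)) (inv_nonneg.2 hdi.le)
  have hCeq : (M + m) • (1 : Matrix n n ℝ) - (M * m) • A⁻¹ - A = U * diagonal f * Uᴴ := by
    have hfd : diagonal f = (M + m) • (1 : Matrix n n ℝ)
        - (M * m) • diagonal (fun i => (d i)⁻¹) - diagonal d := by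
      ext i j
      by_cases h : i = j <;> simp [h, diagonal, hf_def, Matrix.one_apply]
    rw [hfd, hAinv, hAspec]
    simp only [Matrix.mul_sub, Matrix.sub_mul, Matrix.mul_smul, Matrix.smul_mul,
      Matrix.mul_one]
    rw [hUU']
  have hC : ((M + m) • (1 : Matrix n n ℝ) - (M * m) • A⁻¹ - A).PosSemidef := by
    rw [hCeq]
    exact (Matrix.PosSemidef.diagonal hf_nonneg).mul_mul_conjTranspose_same U
  -- Step 2: apply Φ
  have hΦC : ((M + m) • (1 : Matrix n n ℝ) - (M * m) • Φ A⁻¹ - Φ A).PosSemidef := by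
    have := hΦpos _ hC
    simp only [map_sub, LinearMap.map_smul, hΦ1] at this
    exact this
  -- Step 3: Φ A is positive definite
  have hB : (Φ A).PosDef := by
    have h1 : (Φ A - m • (1 : Matrix n n ℝ)).PosSemidef := by
      have := hΦpos _ hmA
      simp only [map_sub, LinearMap.map_smul, hΦ1] at this
      exact this
    have := (posDef_smul_one (n := n) hm).add_posSemidef h1
    simpa using this
  have hBinv : (Φ A)⁻¹.PosDef := hB.inv
  have hBB' : Φ A * (Φ A)⁻¹ = 1 := mul_nonsing_inv _ hB.det_pos.ne'.isUnit
  -- Step 4: quadratic trick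
  set t : ℝ := (M + m) / 2 with ht_def
  set E : Matrix n n ℝ := Φ A - t • (1 : Matrix n n ℝ) with hE_def
  have hBB : Φ A * (Φ A)⁻¹ = 1 := by
    exact mul_nonsing_inv _ hB.det_pos.ne'.isUnit
  have hB'B : (Φ A)⁻¹ * Φ A = 1 := by
    exact nonsing_inv_mul _ hB.det_pos.ne'.isUnit
  have hEherm : Eᴴ = E := by
    rw [hE_def, conjTranspose_sub, hB.isHermitian.eq, conjTranspose_smul]
    simp
  have h2t : (M + m) = t + t := by rw [ht_def]; ring
  have hkey : E * (Φ A)⁻¹ * Eᴴ = (t ^ 2) • (Φ A)⁻¹ - (M + m) • (1 : Matrix n n ℝ) + Φ A := by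
    rw [hEherm, hE_def]
    have expand : (Φ A - t • (1 : Matrix n n ℝ)) * (Φ A)⁻¹ * (Φ A - t • (1 : Matrix n n ℝ))
        = Φ A * (Φ A)⁻¹ * Φ A - t • (Φ A * (Φ A)⁻¹) - t • ((Φ A)⁻¹ * Φ A)
          + (t * t) • (Φ A)⁻¹ := by
      simp only [Matrix.sub_mul, Matrix.mul_sub, Matrix.smul_mul, Matrix.mul_smul,
        Matrix.mul_one, Matrix.one_mul, smul_smul, smul_sub, smul_add]
      module
    rw [expand, hBB, hB'B, Matrix.one_mul, h2t]
    module
  have hS2 : ((t ^ 2) • (Φ A)⁻¹ - (M + m) • (1 : Matrix n n ℝ) + Φ A).PosSemidef := by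
    rw [← hkey]
    exact hBinv.posSemidef.mul_mul_conjTranspose_same E
  -- combine
  have hsum : ((t ^ 2) • (Φ A)⁻¹ - (M * m) • Φ A⁻¹).PosSemidef := by
    have := hΦC.add hS2
    have heq : ((M + m) • (1 : Matrix n n ℝ) - (M * m) • Φ A⁻¹ - Φ A)
        + ((t ^ 2) • (Φ A)⁻¹ - (M + m) • (1 : Matrix n n ℝ) + Φ A)
        = (t ^ 2) • (Φ A)⁻¹ - (M * m) • Φ A⁻¹ := by abel
    rwa [heq] at this
  have hfinal := posSemidef_smul' hsum (c := (M * m)⁻¹) (by positivity)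
  have heq2 : (M * m)⁻¹ • ((t ^ 2) • (Φ A)⁻¹ - (M * m) • Φ A⁻¹)
      = ((M + m) ^ 2 / (4 * M * m)) • (Φ A)⁻¹ - Φ A⁻¹ := by
    rw [smul_sub, smul_smul, smul_smul]
    congr 1
    · congr 1
      rw [ht_def]
      field_simp
      ring
    · rw [inv_mul_cancel₀ (by positivity), one_smul]
  rwa [heq2] at hfinal
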